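/- Let α, β ∈ ℂ with |α| > 1 and |β| > 1, and let ℤ act on X = ℂ² ∖ {(0,0)} by n · (z₁, z₂) = (αⁿ·z₁, βⁿ·z₂). Then the orbit space X/ℤ, equipped with the quotient topology, is a compact Hausdorff topological space. -/

import Mathlib

open Set

private lemma zpowBaseLe {a b : ℝ} (ha : 0 < a) (hab : a ≤ b) {n : ℤ} (hn : 0 ≤ n) :
    a ^ n ≤ b ^ n := by
  lift n to ℕ using hn
  simpa using pow_le_pow_left₀ ha.le hab n

private lemma zpowBaseLeNeg {a b : ℝ} (ha : 0 < a) (hab : a ≤ b) {n : ℤ} (hn : n ≤ 0) :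
    b ^ n ≤ a ^ n := by
  have h2 : (b ^ (-n))⁻¹ ≤ (a ^ (-n))⁻¹ :=
    inv_anti₀ (zpow_pos ha _) (zpowBaseLe ha hab (by omega))
  simpa [zpow_neg] using h2

private lemma hopfKeyA {α β : ℂ} (hα : 1 < ‖α‖) (hβ : 1 < ‖β‖) {n : ℤ} (hn : 0 ≤ n)
    (z : ℂ × ℂ) : (min ‖α‖ ‖β‖) ^ n * ‖z‖ ≤ ‖(α ^ n * z.1, β ^ n * z.2)‖ := by
  have hc0 : (0:ℝ) < min ‖α‖ ‖β‖ := lt_min (by linarith) (by linarith)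
  rw [Prod.norm_def, Prod.norm_def, mul_max_of_nonneg _ _ (zpow_pos hc0 n).le]
  refine max_le_max ?_ ?_ <;> rw [norm_mul, norm_zpow]
  · exact mul_le_mul_of_nonneg_right (zpowBaseLe hc0 (min_le_left _ _) hn) (norm_nonneg _)
  · exact mul_le_mul_of_nonneg_right (zpowBaseLe hc0 (min_le_right _ _) hn) (norm_nonneg _)

private lemma hopfKeyB {α β : ℂ} (hα : 1 < ‖α‖) (hβ : 1 < ‖β‖) {n : ℤ} (hn : n ≤ 0)
    (z : ℂ × ℂ) : ‖(α ^ n * z.1, β ^ n * z.2)‖ ≤ (min ‖α‖ ‖β‖) ^ n * ‖z‖ := by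
  have hc0 : (0:ℝ) < min ‖α‖ ‖β‖ := lt_min (by linarith) (by linarith)
  rw [Prod.norm_def, Prod.norm_def, mul_max_of_nonneg _ _ (zpow_pos hc0 n).le]
  refine max_le_max ?_ ?_ <;> rw [norm_mul, norm_zpow]
  · exact mul_le_mul_of_nonneg_right (zpowBaseLeNeg hc0 (min_le_left _ _) hn) (norm_nonneg _)
  · exact mul_le_mul_of_nonneg_right (zpowBaseLeNeg hc0 (min_le_right _ _) hn) (norm_nonneg _)

private lemma hopfKeyC {α β : ℂ} (hα : 1 < ‖α‖) (hβ : 1 < ‖β‖) (n : ℤ) (z : ℂ × ℂ) :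
    ‖(α ^ n * z.1, β ^ n * z.2)‖
      ≤ (max ‖α‖ ‖β‖) * ‖(α ^ (n - 1) * z.1, β ^ (n - 1) * z.2)‖ := by
  have hα0 : (0:ℝ) < ‖α‖ := by linarith
  have hβ0 : (0:ℝ) < ‖β‖ := by linarith
  have hC0 : (0:ℝ) ≤ max ‖α‖ ‖β‖ := le_max_of_le_left hα0.le
  rw [Prod.norm_def, Prod.norm_def, mul_max_of_nonneg _ _ hC0]
  refine max_le_max ?_ ?_ <;> rw [norm_mul, norm_zpow, norm_mul, norm_zpow]
  · have h1 : ‖α‖ ^ n = ‖α‖ * ‖α‖ ^ (n - 1) := by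
      rw [mul_comm, ← zpow_add_one₀ hα0.ne', sub_add_cancel]
    rw [h1, mul_assoc]
    exact mul_le_mul_of_nonneg_right (le_max_left _ _)
      (mul_nonneg (zpow_pos hα0 _).le (norm_nonneg _))
  · have h1 : ‖β‖ ^ n = ‖β‖ * ‖β‖ ^ (n - 1) := by
      rw [mul_comm, ← zpow_add_one₀ hβ0.ne', sub_add_cancel]
    rw [h1, mul_assoc]
    exact mul_le_mul_of_nonneg_right (le_max_right _ _)
      (mul_nonneg (zpow_pos hβ0 _).le (norm_nonneg _))

private lemma hopfReach {α β : ℂ} (hα : 1 < ‖α‖) (hβ : 1 < ‖β‖) (z : ℂ × ℂ) (hz : z ≠ 0) :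
    ∃ n : ℤ, 1 ≤ ‖(α ^ n * z.1, β ^ n * z.2)‖ ∧
      ‖(α ^ n * z.1, β ^ n * z.2)‖ ≤ max ‖α‖ ‖β‖ := by
  set c : ℝ := min ‖α‖ ‖β‖ with hc
  have hc1 : 1 < c := lt_min hα hβ
  have hc0 : (0:ℝ) < c := by linarith
  have hm : 0 < ‖z‖ := norm_pos_iff.2 hz
  set P : ℤ → Prop := fun n => 1 ≤ ‖(α ^ n * z.1, β ^ n * z.2)‖ with hP
  obtain ⟨N, hN⟩ := pow_unbounded_of_one_lt ‖z‖⁻¹ hc1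
  have hinh : ∃ n : ℤ, P n := by
    refine ⟨N, ?_⟩
    have h1 := hopfKeyA hα hβ (n := N) (by positivity) z
    have h2 : (1:ℝ) < c ^ (N:ℤ) * ‖z‖ := by
      rw [zpow_natCast]
      have := mul_lt_mul_of_pos_right hN hm
      rwa [inv_mul_cancel₀ hm.ne'] at this
    exact le_trans h2.le h1
  obtain ⟨N', hN'⟩ := pow_unbounded_of_one_lt ‖z‖ hc1
  have hbdd : ∃ b : ℤ, ∀ n : ℤ, P n → b ≤ n := by
    refine ⟨-(N' : ℤ), fun n hn => ?_⟩
    by_contra hcon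
    push_neg at hcon
    have hn0 : n ≤ 0 := by omega
    have h1 := hopfKeyB hα hβ hn0 z
    have h2 : c ^ n * ‖z‖ < c ^ n * c ^ (N' : ℤ) :=
      mul_lt_mul_of_pos_left (by rwa [zpow_natCast]) (zpow_pos hc0 _)
    rw [← zpow_add₀ hc0.ne'] at h2
    have h3 : c ^ (n + N') < c ^ (0:ℤ) := by
      apply zpow_lt_zpow_right₀ hc1
      omega
    rw [zpow_zero] at h3
    have := hn.trans (h1.trans (h2.le.trans h3.le))
    linarith
  obtain ⟨n₀, hPn₀, hmin⟩ := Int.exists_least_of_bdd hbdd hinh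
  refine ⟨n₀, hPn₀, ?_⟩
  have hlt : ‖(α ^ (n₀ - 1) * z.1, β ^ (n₀ - 1) * z.2)‖ < 1 := by
    by_contra h
    push_neg at h
    have := hmin _ h
    omega
  calc ‖(α ^ n₀ * z.1, β ^ n₀ * z.2)‖
      ≤ (max ‖α‖ ‖β‖) * ‖(α ^ (n₀ - 1) * z.1, β ^ (n₀ - 1) * z.2)‖ := hopfKeyC hα hβ n₀ z
    _ ≤ (max ‖α‖ ‖β‖) * 1 := mul_le_mul_of_nonneg_left hlt.le (by positivity)
    _ = max ‖α‖ ‖β‖ := mul_one _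

/-- The `ℤ`-action (as a `Multiplicative ℤ` mul-action) on `ℂ² \ {0}`. -/
noncomputable def hopfAct (α β : ℂ) (hα0 : α ≠ 0) (hβ0 : β ≠ 0) :
    MulAction (Multiplicative ℤ) {z : ℂ × ℂ // z ≠ 0} where
  smul n z := ⟨(α ^ n.toAdd * z.1.1, β ^ n.toAdd * z.1.2), by
    intro h
    rw [Prod.mk_eq_zero] at h
    exact z.2 (Prod.ext_iff.2
      ⟨by simpa using (mul_eq_zero.1 h.1).resolve_left (zpow_ne_zero _ hα0),
       by simpa using (mul_eq_zero.1 h.2).resolve_left (zpow_ne_zero _ hβ0)⟩)⟩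
  one_smul z := Subtype.ext (by
    show (α ^ Multiplicative.toAdd 1 * z.1.1, β ^ Multiplicative.toAdd 1 * z.1.2) = z.1
    simp)
  mul_smul a b z := Subtype.ext (by
    show (α ^ (a * b).toAdd * z.1.1, β ^ (a * b).toAdd * z.1.2)
      = (α ^ a.toAdd * (α ^ b.toAdd * z.1.1), β ^ a.toAdd * (β ^ b.toAdd * z.1.2))
    simp [Prod.ext_iff, toAdd_mul, zpow_add₀ hα0, zpow_add₀ hβ0, mul_assoc])


/-- The orbit equivalence relation of the `ℤ`-action `n · (z₁, z₂) = (αⁿ·z₁, βⁿ·z₂)`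
on `X = ℂ² \ {(0,0)}`. -/
def hopfSetoid (α β : ℂ) (hα : 1 < ‖α‖) (hβ : 1 < ‖β‖) :
    Setoid {z : ℂ × ℂ // z ≠ 0} where
  r x y := ∃ n : ℤ,
    α ^ n * (x : ℂ × ℂ).1 = (y : ℂ × ℂ).1 ∧ β ^ n * (x : ℂ × ℂ).2 = (y : ℂ × ℂ).2
  iseqv := by
    have hα0 : α ≠ 0 := by rintro rfl; simp at hα <;> linarith
    have hβ0 : β ≠ 0 := by rintro rfl; simp at hβ <;> linarith
    constructor
    · exact fun x => ⟨0, by simp, by simp⟩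
    · rintro x y ⟨n, h1, h2⟩
      refine ⟨-n, ?_, ?_⟩
      · rw [← h1, ← mul_assoc, ← zpow_add₀ hα0]; simp
      · rw [← h2, ← mul_assoc, ← zpow_add₀ hβ0]; simp
    · rintro x y z ⟨n, h1, h2⟩ ⟨m, h1', h2'⟩
      refine ⟨n + m, ?_, ?_⟩
      · rw [← h1', ← h1, zpow_add₀ hα0]; ring
      · rw [← h2', ← h2, zpow_add₀ hβ0]; ring


/-- The orbit space of the Hopf-surface action, with the quotient topology, is a
compact Hausdorff space. -/
theorem stmt8 (α β : ℂ) (hα : 1 < ‖α‖) (hβ : 1 < ‖β‖) :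
    CompactSpace (Quotient (hopfSetoid α β hα hβ)) ∧
    T2Space (Quotient (hopfSetoid α β hα hβ)) := by
  have hαn : 1 < ‖α‖ := hα
  have hβn : 1 < ‖β‖ := hβ
  have hα0 : α ≠ 0 := by rintro rfl; simp at hαn; linarith
  have hβ0 : β ≠ 0 := by rintro rfl; simp at hβn; linarith
  set c : ℝ := min ‖α‖ ‖β‖ with hcdef
  set C : ℝ := max ‖α‖ ‖β‖ with hCdef
  have hc1 : 1 < c := lt_min hαn hβn
  have hc0 : (0:ℝ) < c := by linarith
  have hC1 : 1 < C := lt_of_lt_of_le hαn (le_max_left _ _)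
  letI act := hopfAct α β hα0 hβ0
  have hsetEq : hopfSetoid α β hα hβ
      = MulAction.orbitRel (Multiplicative ℤ) {z : ℂ × ℂ // z ≠ 0} := by
    apply Setoid.ext
    intro x y
    show (∃ n : ℤ, α ^ n * (x : ℂ × ℂ).1 = (y : ℂ × ℂ).1
        ∧ β ^ n * (x : ℂ × ℂ).2 = (y : ℂ × ℂ).2) ↔ x ∈ MulAction.orbit _ y
    constructor
    · rintro ⟨n, h1, h2⟩
      refine ⟨Multiplicative.ofAdd (-n), Subtype.ext (Prod.ext_iff.2 ⟨?_, ?_⟩)⟩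
      · show α ^ (-n) * (y : ℂ × ℂ).1 = (x : ℂ × ℂ).1
        rw [← h1, ← mul_assoc, ← zpow_add₀ hα0]; simp
      · show β ^ (-n) * (y : ℂ × ℂ).2 = (x : ℂ × ℂ).2
        rw [← h2, ← mul_assoc, ← zpow_add₀ hβ0]; simp
    · rintro ⟨g, rfl⟩
      refine ⟨-g.toAdd, ?_, ?_⟩
      · show α ^ (-g.toAdd) * (α ^ g.toAdd * (y : ℂ × ℂ).1) = (y : ℂ × ℂ).1
        rw [← mul_assoc, ← zpow_add₀ hα0]; simp
      · show β ^ (-g.toAdd) * (β ^ g.toAdd * (y : ℂ × ℂ).2) = (y : ℂ × ℂ).2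
        rw [← mul_assoc, ← zpow_add₀ hβ0]; simp
  rw [hsetEq]
  haveI : ContinuousConstSMul (Multiplicative ℤ) {z : ℂ × ℂ // z ≠ 0} := by
    refine ⟨fun g => ?_⟩
    have hcont : Continuous fun z : {z : ℂ × ℂ // z ≠ 0} =>
        ((α ^ g.toAdd * (z : ℂ × ℂ).1, β ^ g.toAdd * (z : ℂ × ℂ).2) : ℂ × ℂ) := by
      fun_prop
    exact hcont.subtype_mk _
  constructor
  · -- compactness
    set S : Set (ℂ × ℂ) := {w | 1 ≤ ‖w‖ ∧ ‖w‖ ≤ C} with hSdef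
    have hS_compact : IsCompact S := by
      apply Metric.isCompact_of_isClosed_isBounded
      · have : S = (fun w : ℂ × ℂ => ‖w‖) ⁻¹' (Set.Icc 1 C) := by
          ext w; simp [hSdef, Set.mem_Icc]
        rw [this]; exact isClosed_Icc.preimage continuous_norm
      · refine (Metric.isBounded_closedBall (x := (0 : ℂ × ℂ)) (r := C)).subset ?_
        intro w hw
        simpa [Metric.mem_closedBall, dist_zero_right] using hw.2
    have hS_sub : IsCompact {z : {z : ℂ × ℂ // z ≠ 0} | (z : ℂ × ℂ) ∈ S} := by
      rw [Subtype.isCompact_iff]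
      have : (Subtype.val '' {z : {z : ℂ × ℂ // z ≠ 0} | (z : ℂ × ℂ) ∈ S}) = S := by
        ext w
        constructor
        · rintro ⟨z, hz, rfl⟩; exact hz
        · intro hw
          have hw0 : w ≠ 0 := by
            intro h
            rw [h] at hw
            simp [hSdef] at hw
            linarith [hw.1]
          exact ⟨⟨w, hw0⟩, hw, rfl⟩
      rw [this]; exact hS_compact
    refine ⟨?_⟩
    have huniv : (Set.univ : Set (Quotient (MulAction.orbitRel (Multiplicative ℤ)
        {z : ℂ × ℂ // z ≠ 0})))
        = Quotient.mk _ '' {z : {z : ℂ × ℂ // z ≠ 0} | (z : ℂ × ℂ) ∈ S} := by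
      ext q
      simp only [Set.mem_univ, true_iff]
      obtain ⟨z, rfl⟩ := q.exists_rep
      obtain ⟨n, h1, h2⟩ := hopfReach hαn hβn (z : ℂ × ℂ) z.2
      refine ⟨Multiplicative.ofAdd n • z, ⟨h1, h2⟩, ?_⟩
      exact Quotient.sound ⟨Multiplicative.ofAdd n, rfl⟩
    rw [huniv]
    exact hS_sub.image continuous_quotient_mk'
  · -- T2
    haveI : LocallyCompactSpace {z : ℂ × ℂ // z ≠ 0} :=
      (isOpen_ne (x := (0 : ℂ × ℂ))).locallyCompactSpace
    haveI : ProperlyDiscontinuousSMul (Multiplicative ℤ) {z : ℂ × ℂ // z ≠ 0} := by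
      refine ⟨fun {K L} hK hL => ?_⟩
      rcases K.eq_empty_or_nonempty with rfl | hKne
      · apply Set.Finite.subset (Set.finite_empty)
        intro γ hγ
        simp at hγ
      rcases L.eq_empty_or_nonempty with rfl | hLne
      · apply Set.Finite.subset (Set.finite_empty)
        intro γ hγ
        simp [Set.inter_empty] at hγ
      have hnorm : ContinuousOn (fun z : {z : ℂ × ℂ // z ≠ 0} => ‖(z : ℂ × ℂ)‖) K :=
        (continuous_norm.comp continuous_subtype_val).continuousOn
      have hnormL : ContinuousOn (fun z : {z : ℂ × ℂ // z ≠ 0} => ‖(z : ℂ × ℂ)‖) L :=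
        (continuous_norm.comp continuous_subtype_val).continuousOn
      obtain ⟨k₁, hk₁, haK⟩ := hK.exists_isMinOn hKne hnorm
      obtain ⟨k₂, hk₂, hbK⟩ := hK.exists_isMaxOn hKne hnorm
      obtain ⟨l₁, hl₁, haL⟩ := hL.exists_isMinOn hLne hnormL
      obtain ⟨l₂, hl₂, hbL⟩ := hL.exists_isMaxOn hLne hnormL
      set aK := ‖(k₁ : ℂ × ℂ)‖ with haKdef
      set bK := ‖(k₂ : ℂ × ℂ)‖ with hbKdef
      set aL := ‖(l₁ : ℂ × ℂ)‖ with haLdef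
      set bL := ‖(l₂ : ℂ × ℂ)‖ with hbLdef
      have haK0 : 0 < aK := norm_pos_iff.2 k₁.2
      have haL0 : 0 < aL := norm_pos_iff.2 l₁.2
      set M : ℝ := max (bL / aK) (bK / aL) with hMdef
      obtain ⟨N, hN⟩ := pow_unbounded_of_one_lt M hc1
      have hNz : M < c ^ (N : ℤ) := by rwa [zpow_natCast]
      apply Set.Finite.subset ((Set.finite_Icc (-(N : ℤ)) N).image Multiplicative.ofAdd)
      intro γ hγ
      obtain ⟨x, ⟨k, hkK, rfl⟩, hxL⟩ := hγ
      set n : ℤ := γ.toAdd with hndef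
      have hsm : ((γ • k : {z : ℂ × ℂ // z ≠ 0}) : ℂ × ℂ)
          = (α ^ n * (k : ℂ × ℂ).1, β ^ n * (k : ℂ × ℂ).2) := rfl
      have hmem : γ = Multiplicative.ofAdd n := rfl
      refine ⟨n, ?_, hmem.symm⟩
      rw [Set.mem_Icc]
      rcases le_or_gt 0 n with hn0 | hn0
      · -- positive case: c^n * aK ≤ bL
        have h1 : c ^ n * aK ≤ c ^ n * ‖(k : ℂ × ℂ)‖ :=
          mul_le_mul_of_nonneg_left (haK hkK) (zpow_pos hc0 _).le
        have h2 := hopfKeyA hαn hβn hn0 (k : ℂ × ℂ)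
        have h3 : ‖((γ • k : {z : ℂ × ℂ // z ≠ 0}) : ℂ × ℂ)‖ ≤ bL := hbL hxL
        rw [hsm] at h3
        have h4 : c ^ n * aK ≤ bL := le_trans h1 (le_trans h2 h3)
        have h5 : c ^ n ≤ bL / aK := (le_div_iff₀ haK0).2 h4
        have h6 : c ^ n < c ^ (N : ℤ) :=
          lt_of_le_of_lt (h5.trans (le_max_left _ _)) hNz
        have h7 : n < (N : ℤ) := (zpow_lt_zpow_iff_right₀ hc1).1 h6
        omega
      · -- negative case: aL ≤ c^n * bK
        have h2 := hopfKeyB hαn hβn hn0.le (k : ℂ × ℂ)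
        have h3 : aL ≤ ‖((γ • k : {z : ℂ × ℂ // z ≠ 0}) : ℂ × ℂ)‖ := haL hxL
        rw [hsm] at h3
        have h1 : c ^ n * ‖(k : ℂ × ℂ)‖ ≤ c ^ n * bK :=
          mul_le_mul_of_nonneg_left (hbK hkK) (zpow_pos hc0 _).le
        have h4 : aL ≤ c ^ n * bK := le_trans h3 (le_trans h2 h1)
        have h5 : c ^ (-n) * aL ≤ c ^ (-n) * (c ^ n * bK) :=
          mul_le_mul_of_nonneg_left h4 (zpow_pos hc0 _).le
        rw [← mul_assoc, ← zpow_add₀ hc0.ne', neg_add_cancel, zpow_zero, one_mul] at h5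
        have h6 : c ^ (-n) ≤ bK / aL := (le_div_iff₀ haL0).2 h5
        have h7 : c ^ (-n) < c ^ (N : ℤ) :=
          lt_of_le_of_lt (h6.trans (le_max_right _ _)) hNz
        have h8 : -n < (N : ℤ) := (zpow_lt_zpow_iff_right₀ hc1).1 h7
        omega
    exact t2Space_of_properlyDiscontinuousSMul_of_t2Space
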